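/- arXiv:2109.15124 — 3 statements merged into one kernel-verified Lean document; each statement's English description precedes it below -/
import Mathlib

section
/- Let φ₁, φ₂ : A^k → B(H) be symmetric invariant completely positive k-linear maps with minimal Stinespring dilations (π_p^{φᵢ}, V_{φᵢ}, H^{φᵢ}) for i = 1, 2. If φ₂ − φ₁ is completely positive (i.e., φ₁ ≤ φ₂), then there exists a unique contraction T ∈ B(H^{φ₂}, H^{φ₁}) with T V_{φ₂} = V_{φ₁} and T Π_{p=1}^m π_p^{φ₂}(a_p) = Π_{p=1}^m π_p^{φ₁}(a_p) T for all a₁,…,a_m ∈ A. -/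
open scoped ComplexOrder

variable {A : Type*} [Ring A] [StarRing A] [Algebra ℂ A] [StarModule ℂ A]
variable {H : Type*} [NormedAddCommGroup H] [InnerProductSpace ℂ H] [CompleteSpace H]
variable {r : ℕ}

/-- The canonical semi-inner product of elementary tensors `a₁⊗…⊗a_m⊗g` and `b₁⊗…⊗b_m⊗h`
(`m = r+1`, odd case `k = 2m−1 = 2r+1`) associated to a `k`-linear map `φ`, namely
`⟨φ(b_m*,…,b₂*, b₁*a₁, a₂,…,a_m)g, h⟩`.  A `(2r+1)`-linear map `A^{2r+1} → B(H)` is encoded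
in uncurried form `φ : (Fin r → A) → A → (Fin r → A) → (H →L[ℂ] H)`, the middle argument
being the `m`-th variable.  (The paper's inner product `⟨u, v⟩` is linear in `u`; Mathlib's
`inner u v` is linear in `v`, so the paper's `⟨u, v⟩` is `inner v u` here.) -/
noncomputable def gram (φ : (Fin r → A) → A → (Fin r → A) → (H →L[ℂ] H))
    (a : Fin (r + 1) → A) (g : H) (b : Fin (r + 1) → A) (h : H) : ℂ :=
  inner ℂ h ((φ (fun i => star (b i.rev.succ)) (star (b 0) * a 0) (fun i => a i.succ)) g)

/-- `φ` is `(2r+1)`-linear: complex-linear in each of its `2r+1` variables. -/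
def IsMultilinearOdd (φ : (Fin r → A) → A → (Fin r → A) → (H →L[ℂ] H)) : Prop :=
  (∀ x z, IsLinearMap ℂ fun y => φ x y z) ∧
  (∀ x y z (i : Fin r), IsLinearMap ℂ fun u => φ (Function.update x i u) y z) ∧
  (∀ x y z (i : Fin r), IsLinearMap ℂ fun u => φ x y (Function.update z i u))

/-- `φ` is symmetric: `φ(a₁,…,a_k)* = φ(a_k*,…,a₁*)`. -/
def IsSymmMapOdd (φ : (Fin r → A) → A → (Fin r → A) → (H →L[ℂ] H)) : Prop :=
  ∀ x y z, star (φ x y z) = φ (fun i => star (z i.rev)) (star y) (fun i => star (x i.rev))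

/-- `φ` is invariant:
`φ(a₁c₁,…,a_{m−1}c_{m−1}, a_m, a_{m+1},…,a_{2m−1}) = φ(a₁,…,a_m, c_{m−1}a_{m+1},…,c₁a_{2m−1})`. -/
def IsInvariantOdd (φ : (Fin r → A) → A → (Fin r → A) → (H →L[ℂ] H)) : Prop :=
  ∀ (x c : Fin r → A) (y : A) (z : Fin r → A),
    φ (fun i => x i * c i) y z = φ x y (fun i => c i.rev * z i)

/-- `φ` is completely positive: the canonical sesquilinear form on `A^{⊗m} ⊗ H` is positive
semi-definite, i.e. all Gram sums over finite families of elementary tensors are `≥ 0`. -/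
def IsCPOdd (φ : (Fin r → A) → A → (Fin r → A) → (H →L[ℂ] H)) : Prop :=
  ∀ (n : ℕ) (a : Fin n → Fin (r + 1) → A) (g : Fin n → H),
    0 ≤ ∑ j, ∑ i, gram φ (a j) (g j) (a i) (g i)

/-- The action of `π_p(a)`: multiply the `p`-th tensor slot on the left by `a`. -/
def mulSlot (p : Fin (r + 1)) (a : A) (c : Fin (r + 1) → A) : Fin (r + 1) → A :=
  Function.update c p (a * c p)

variable {K : Type*} [NormedAddCommGroup K] [InnerProductSpace ℂ K] [CompleteSpace K]

/-- `π : p ↦ π_p` is a commuting family of unital `*`-homomorphisms `A → B(K)`. -/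
def IsRepFamily (π : Fin (r + 1) → A → (K →L[ℂ] K)) : Prop :=
  (∀ p, π p 1 = 1) ∧
  (∀ p a b, π p (a * b) = π p a * π p b) ∧
  (∀ p a b, π p (a + b) = π p a + π p b) ∧
  (∀ (p) (c : ℂ) (a), π p (c • a) = c • π p a) ∧
  (∀ p a, π p (star a) = star (π p a)) ∧
  (∀ p q a b, p ≠ q → Commute (π p a) (π q b))

/-- The product `π₁(a₁)π₂(a₂)⋯π_m(a_m)` (slots indexed by `Fin (r+1)`, `m = r+1`). -/
noncomputable def dilProd (π : Fin (r + 1) → A → (K →L[ℂ] K)) (a : Fin (r + 1) → A) :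
    K →L[ℂ] K :=
  (List.ofFn fun p => π p (a p)).prod

/-- The operator `π₁(a_m)π₂(a_{m−1}a_{m+1})⋯π_m(a₁a_{2m−1})`, where the `(2m−1)`-tuple
`(a₁,…,a_{2m−1})` is encoded as `x = (a₁,…,a_{m−1})`, `y = a_m`, `z = (a_{m+1},…,a_{2m−1})`. -/
noncomputable def dilOp (π : Fin (r + 1) → A → (K →L[ℂ] K))
    (x : Fin r → A) (y : A) (z : Fin r → A) : K →L[ℂ] K :=
  π 0 y * (List.ofFn fun i : Fin r => π i.succ (x i.rev * z i)).prod

/-- `(π, V, K)` is a Stinespring dilation of the `(2m−1)`-linear map `φ`:  `V` is a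
contraction and `φ(a₁,…,a_{2m−1}) = V* π₁(a_m)π₂(a_{m−1}a_{m+1})⋯π_m(a₁a_{2m−1}) V`. -/
def IsDilation (φ : (Fin r → A) → A → (Fin r → A) → (H →L[ℂ] H))
    (π : Fin (r + 1) → A → (K →L[ℂ] K)) (V : H →L[ℂ] K) : Prop :=
  ‖V‖ ≤ 1 ∧ ∀ x y z, φ x y z = ContinuousLinearMap.adjoint V ∘L (dilOp π x y z ∘L V)

/-- Minimality: `K` is the closed span of `{π₁(a₁)⋯π_m(a_m) V h}`. -/
def IsMinimalDil (π : Fin (r + 1) → A → (K →L[ℂ] K)) (V : H →L[ℂ] K) : Prop :=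
  (Submodule.span ℂ
    {ξ : K | ∃ (a : Fin (r + 1) → A) (h : H), ξ = dilProd π a (V h)}).topologicalClosure = ⊤

/-- `T` lies in the commutant `⋂_p π_p(A)′`. -/
def InCommutant (π : Fin (r + 1) → A → (K →L[ℂ] K)) (T : K →L[ℂ] K) : Prop :=
  ∀ (p : Fin (r + 1)) (a : A), Commute T (π p a)

/-- The map `φ_T(a₁,…,a_{2m−1}) = V* T π₁(a_m)π₂(a_{m−1}a_{m+1})⋯π_m(a₁a_{2m−1}) V`. -/
noncomputable def phiT (π : Fin (r + 1) → A → (K →L[ℂ] K)) (V : H →L[ℂ] K)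
    (T : K →L[ℂ] K) (x : Fin r → A) (y : A) (z : Fin r → A) : H →L[ℂ] H :=
  ContinuousLinearMap.adjoint V ∘L ((T ∘L dilOp π x y z) ∘L V)

set_option linter.unusedSectionVars false

private lemma ofFn_prod_mul {M : Type*} [Monoid M] :
    ∀ {n : ℕ} (f g : Fin n → M), (∀ i j, i ≠ j → Commute (f i) (g j)) →
      (List.ofFn f).prod * (List.ofFn g).prod = (List.ofFn fun i => f i * g i).prod := by
  intro n
  induction n with
  | zero => intro f g _; simp
  | succ n ih =>
    intro f g hc
    have hcomm : Commute (g 0) (List.ofFn fun i : Fin n => f i.succ).prod := by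
      refine Commute.list_prod_right _ _ ?_
      intro x hx
      rw [List.mem_ofFn] at hx
      obtain ⟨i, rfl⟩ := hx
      exact (hc i.succ 0 (Fin.succ_ne_zero i)).symm
    rw [List.ofFn_succ, List.ofFn_succ, List.ofFn_succ, List.prod_cons, List.prod_cons,
      List.prod_cons, ← ih (fun i => f i.succ) (fun i => g i.succ)
        (fun i j hij => hc i.succ j.succ (by simpa using hij))]
    calc f 0 * (List.ofFn fun i : Fin n => f i.succ).prod *
        (g 0 * (List.ofFn fun i : Fin n => g i.succ).prod)
        = f 0 * (((List.ofFn fun i : Fin n => f i.succ).prod * g 0) *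
            (List.ofFn fun i : Fin n => g i.succ).prod) := by
          simp [mul_assoc]
      _ = f 0 * ((g 0 * (List.ofFn fun i : Fin n => f i.succ).prod) *
            (List.ofFn fun i : Fin n => g i.succ).prod) := by rw [hcomm.eq]
      _ = f 0 * g 0 * ((List.ofFn fun i : Fin n => f i.succ).prod *
            (List.ofFn fun i : Fin n => g i.succ).prod) := by simp [mul_assoc]

private lemma star_ofFn_prod {M : Type*} [Monoid M] [StarMul M] :
    ∀ {n : ℕ} (f : Fin n → M), (∀ i j, i ≠ j → Commute (f i) (f j)) →
      star (List.ofFn f).prod = (List.ofFn fun i => star (f i)).prod := by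
  intro n
  induction n with
  | zero => intro f _; simp
  | succ n ih =>
    intro f hc
    rw [List.ofFn_succ, List.prod_cons, star_mul,
      ih (fun i => f i.succ) (fun i j hij => hc i.succ j.succ (by simpa using hij)),
      List.ofFn_succ (f := fun i => star (f i)), List.prod_cons]
    refine Commute.list_prod_left _ _ ?_
    intro x hx
    rw [List.mem_ofFn] at hx
    obtain ⟨i, rfl⟩ := hx
    exact Commute.star_star (hc i.succ 0 (Fin.succ_ne_zero i))



section DilLemmas

variable {π : Fin (r + 1) → A → (K →L[ℂ] K)} (hrep : IsRepFamily π)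
include hrep

lemma dilProd_mul (a b : Fin (r + 1) → A) :
    dilProd π a * dilProd π b = dilProd π (fun p => a p * b p) := by
  unfold dilProd
  rw [ofFn_prod_mul _ _ (fun i j hij => hrep.2.2.2.2.2 i j _ _ hij)]
  congr 1
  exact congrArg List.ofFn (funext fun p => (hrep.2.1 p _ _).symm)

lemma adjoint_dilProd (a : Fin (r + 1) → A) :
    ContinuousLinearMap.adjoint (dilProd π a) = dilProd π (fun p => star (a p)) := by
  rw [← ContinuousLinearMap.star_eq_adjoint]
  unfold dilProd
  rw [star_ofFn_prod _ (fun i j hij => hrep.2.2.2.2.2 i j _ _ hij)]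
  congr 1
  exact congrArg List.ofFn (funext fun p => (hrep.2.2.2.2.1 p _).symm)

lemma dilProd_one : dilProd π (fun _ => (1 : A)) = 1 := by
  unfold dilProd
  refine List.prod_eq_one ?_
  intro x hx
  rw [List.mem_ofFn] at hx
  obtain ⟨p, rfl⟩ := hx
  exact hrep.1 p

omit hrep

lemma dilProd_eq_dilOp (a b : Fin (r + 1) → A) :
    dilProd π (fun p => star (b p) * a p) =
      dilOp π (fun i => star (b i.rev.succ)) (star (b 0) * a 0) (fun i => a i.succ) := by
  unfold dilProd dilOp
  rw [List.ofFn_succ, List.prod_cons]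
  congr 1
  refine congrArg List.prod (congrArg List.ofFn (funext fun i => ?_))
  simp [Fin.rev_rev]

end DilLemmas

lemma inner_dilProd_eq_gram {φ : (Fin r → A) → A → (Fin r → A) → (H →L[ℂ] H)}
    {π : Fin (r + 1) → A → (K →L[ℂ] K)} {V : H →L[ℂ] K}
    (hrep : IsRepFamily π) (hdil : IsDilation φ π V)
    (a : Fin (r + 1) → A) (g : H) (b : Fin (r + 1) → A) (h : H) :
    (inner ℂ (dilProd π b (V h)) (dilProd π a (V g)) : ℂ) = gram φ a g b h := by
  rw [← ContinuousLinearMap.adjoint_inner_right]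
  have h1 : (ContinuousLinearMap.adjoint (dilProd π b)) (dilProd π a (V g)) =
      dilOp π (fun i => star (b i.rev.succ)) (star (b 0) * a 0) (fun i => a i.succ) (V g) := by
    rw [adjoint_dilProd hrep]
    have : dilProd π (fun p => star (b p)) (dilProd π a (V g)) =
        (dilProd π (fun p => star (b p)) * dilProd π a) (V g) := rfl
    rw [this, dilProd_mul hrep, dilProd_eq_dilOp]
  rw [h1, ← ContinuousLinearMap.adjoint_inner_right (A := V)]
  rw [gram, hdil.2]
  rfl

lemma norm_sq_sum_dilProd {φ : (Fin r → A) → A → (Fin r → A) → (H →L[ℂ] H)}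
    {π : Fin (r + 1) → A → (K →L[ℂ] K)} {V : H →L[ℂ] K}
    (hrep : IsRepFamily π) (hdil : IsDilation φ π V)
    (n : ℕ) (a : Fin n → Fin (r + 1) → A) (g : Fin n → H) :
    ∑ j, ∑ i, gram φ (a j) (g j) (a i) (g i) =
      ((‖∑ j, dilProd π (a j) (V (g j))‖ : ℂ)) ^ 2 := by
  have : ∀ j i, gram φ (a j) (g j) (a i) (g i) =
      (inner ℂ (dilProd π (a i) (V (g i))) (dilProd π (a j) (V (g j))) : ℂ) := fun j i =>
    (inner_dilProd_eq_gram hrep hdil _ _ _ _).symm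
  simp_rw [this, ← sum_inner, ← inner_sum, inner_self_eq_norm_sq_to_K]
  rfl

private lemma comb_eq {W : Type*} {E : Type*} [AddCommMonoid E] [Module ℂ E]
    (G : W → E) (w : W →₀ ℂ) :
    Finsupp.linearCombination ℂ G w =
      ∑ j : Fin w.support.card,
        w (w.support.equivFin.symm j) • G (w.support.equivFin.symm j) := by
  rw [Finsupp.linearCombination_apply, Finsupp.sum, ← Finset.sum_coe_sort,
    ← Equiv.sum_comp w.support.equivFin.symm (fun x : w.support => w x • G x)]

/-- If `φ₁ ≤ φ₂` (i.e. `φ₂ − φ₁` is completely positive) for symmetric invariant completely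
positive `(2m−1)`-linear maps with minimal Stinespring dilations `(π_p^{φᵢ}, V_{φᵢ}, K_i)`,
then there is a unique contraction `T : K₂ → K₁` with `T V_{φ₂} = V_{φ₁}` and
`T Π_p π_p^{φ₂}(a_p) = Π_p π_p^{φ₁}(a_p) T`. -/
theorem stmt11 (φ₁ φ₂ : (Fin r → A) → A → (Fin r → A) → (H →L[ℂ] H))
    (hlin₁ : IsMultilinearOdd φ₁) (hsymm₁ : IsSymmMapOdd φ₁)
    (hinv₁ : IsInvariantOdd φ₁) (hcp₁ : IsCPOdd φ₁)
    (hlin₂ : IsMultilinearOdd φ₂) (hsymm₂ : IsSymmMapOdd φ₂)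
    (hinv₂ : IsInvariantOdd φ₂) (hcp₂ : IsCPOdd φ₂)
    (hle : ∀ (n : ℕ) (a : Fin n → Fin (r + 1) → A) (g : Fin n → H),
      0 ≤ ∑ j, ∑ i,
        (gram φ₂ (a j) (g j) (a i) (g i) - gram φ₁ (a j) (g j) (a i) (g i)))
    {K₁ K₂ : Type*} [NormedAddCommGroup K₁] [InnerProductSpace ℂ K₁] [CompleteSpace K₁]
    [NormedAddCommGroup K₂] [InnerProductSpace ℂ K₂] [CompleteSpace K₂]
    (π₁ : Fin (r + 1) → A → (K₁ →L[ℂ] K₁)) (V₁ : H →L[ℂ] K₁)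
    (π₂ : Fin (r + 1) → A → (K₂ →L[ℂ] K₂)) (V₂ : H →L[ℂ] K₂)
    (hrep₁ : IsRepFamily π₁) (hdil₁ : IsDilation φ₁ π₁ V₁) (hmin₁ : IsMinimalDil π₁ V₁)
    (hrep₂ : IsRepFamily π₂) (hdil₂ : IsDilation φ₂ π₂ V₂) (hmin₂ : IsMinimalDil π₂ V₂) :
    ∃! T : K₂ →L[ℂ] K₁,
      ‖T‖ ≤ 1 ∧ (∀ h : H, T (V₂ h) = V₁ h) ∧
      (∀ (a : Fin (r + 1) → A) (ξ : K₂), T (dilProd π₂ a ξ) = dilProd π₁ a (T ξ)) := by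
  classical
  let g1 : ((Fin (r + 1) → A) × H) → K₁ := fun w => dilProd π₁ w.1 (V₁ w.2)
  let g2 : ((Fin (r + 1) → A) × H) → K₂ := fun w => dilProd π₂ w.1 (V₂ w.2)
  let Φ₁ : (((Fin (r + 1) → A) × H) →₀ ℂ) →ₗ[ℂ] K₁ := Finsupp.linearCombination ℂ g1
  let Φ₂ : (((Fin (r + 1) → A) × H) →₀ ℂ) →ₗ[ℂ] K₂ := Finsupp.linearCombination ℂ g2
  -- the finite-family norm inequality
  have keyfin : ∀ (n : ℕ) (a : Fin n → Fin (r + 1) → A) (g : Fin n → H),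
      ‖∑ j, dilProd π₁ (a j) (V₁ (g j))‖ ≤ ‖∑ j, dilProd π₂ (a j) (V₂ (g j))‖ := by
    intro n a g
    have h0 := hle n a g
    simp only [Finset.sum_sub_distrib] at h0
    rw [norm_sq_sum_dilProd hrep₁ hdil₁ n a g, norm_sq_sum_dilProd hrep₂ hdil₂ n a g,
      sub_nonneg, ← Complex.ofReal_pow, ← Complex.ofReal_pow, Complex.real_le_real] at h0
    have h1 := Real.sqrt_le_sqrt h0
    rwa [Real.sqrt_sq (norm_nonneg _), Real.sqrt_sq (norm_nonneg _)] at h1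
  have key : ∀ w, ‖Φ₁ w‖ ≤ ‖Φ₂ w‖ := by
    intro w
    set n := w.support.card with hn
    let e := w.support.equivFin.symm
    let a : Fin n → Fin (r + 1) → A := fun j => (e j : (Fin (r + 1) → A) × H).1
    let g : Fin n → H := fun j => w (e j) • (e j : (Fin (r + 1) → A) × H).2
    have r1 : Φ₁ w = ∑ j, dilProd π₁ (a j) (V₁ (g j)) := by
      rw [show Φ₁ w = _ from comb_eq g1 w]
      exact Finset.sum_congr rfl fun j _ => by simp [a, g, g1, e, map_smul]
    have r2 : Φ₂ w = ∑ j, dilProd π₂ (a j) (V₂ (g j)) := by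
      rw [show Φ₂ w = _ from comb_eq g2 w]
      exact Finset.sum_congr rfl fun j _ => by simp [a, g, g2, e, map_smul]
    rw [r1, r2]
    exact keyfin n a g
  have hker : LinearMap.ker Φ₂ ≤ LinearMap.ker Φ₁ := by
    intro w hw
    rw [LinearMap.mem_ker] at hw ⊢
    have h1 := key w
    rw [hw, norm_zero] at h1
    exact norm_le_zero_iff.mp h1
  let T₀ : ↥(LinearMap.range Φ₂) →ₗ[ℂ] K₁ :=
    ((LinearMap.ker Φ₂).liftQ Φ₁ hker).comp Φ₂.quotKerEquivRange.symm.toLinearMap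
  have hT₀ : ∀ w, T₀ ⟨Φ₂ w, LinearMap.mem_range_self _ w⟩ = Φ₁ w := by
    intro w
    have hs : Φ₂.quotKerEquivRange.symm ⟨Φ₂ w, LinearMap.mem_range_self _ w⟩ =
        Submodule.Quotient.mk w := by
      rw [LinearEquiv.symm_apply_eq]
      exact Subtype.ext (Φ₂.quotKerEquivRange_apply_mk w).symm
    simp [T₀, hs, Submodule.liftQ_apply]
  have hT₀bound : ∀ ξ : ↥(LinearMap.range Φ₂), ‖T₀ ξ‖ ≤ 1 * ‖ξ‖ := by
    rintro ⟨ξ, w, rfl⟩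
    rw [one_mul]
    calc ‖T₀ ⟨Φ₂ w, ⟨w, rfl⟩⟩‖ = ‖Φ₁ w‖ := congrArg _ (hT₀ w)
      _ ≤ ‖Φ₂ w‖ := key w
      _ = ‖(⟨Φ₂ w, ⟨w, rfl⟩⟩ : ↥(LinearMap.range Φ₂))‖ := rfl
  let f : ↥(LinearMap.range Φ₂) →L[ℂ] K₁ := T₀.mkContinuous 1 hT₀bound
  have hds : Dense ((Submodule.span ℂ
      {ξ : K₂ | ∃ (a : Fin (r + 1) → A) (h : H), ξ = dilProd π₂ a (V₂ h)}) : Set K₂) :=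
    Submodule.dense_iff_topologicalClosure_eq_top.mpr hmin₂
  have hsetr : {ξ : K₂ | ∃ (a : Fin (r + 1) → A) (h : H), ξ = dilProd π₂ a (V₂ h)} =
      Set.range g2 := by
    ext ξ
    constructor
    · rintro ⟨a, h, rfl⟩; exact ⟨(a, h), rfl⟩
    · rintro ⟨⟨a, h⟩, rfl⟩; exact ⟨a, h, rfl⟩
  have hdense : Dense ((LinearMap.range Φ₂ : Submodule ℂ K₂) : Set K₂) := by
    rw [Finsupp.range_linearCombination, ← hsetr]
    exact hds
  let eE : ↥(LinearMap.range Φ₂) →L[ℂ] K₂ := (LinearMap.range Φ₂).subtypeL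
  have h_e : IsUniformInducing eE := isUniformEmbedding_subtype_val.isUniformInducing
  have h_d : DenseRange eE := by
    have h2 : Set.range eE = ((LinearMap.range Φ₂ : Submodule ℂ K₂) : Set K₂) :=
      Subtype.range_val
    rw [DenseRange, h2]
    exact hdense
  let T : K₂ →L[ℂ] K₁ := f.extend eE
  have hTΦ : ∀ w, T (Φ₂ w) = Φ₁ w := by
    intro w
    have h1 : Φ₂ w = eE ⟨Φ₂ w, LinearMap.mem_range_self _ w⟩ := rfl
    rw [h1, ContinuousLinearMap.extend_eq f h_d h_e]
    exact hT₀ w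
  have hTgen : ∀ (a : Fin (r + 1) → A) (h : H),
      T (dilProd π₂ a (V₂ h)) = dilProd π₁ a (V₁ h) := by
    intro a h
    have h2 : dilProd π₂ a (V₂ h) = Φ₂ (Finsupp.single (a, h) 1) := by
      simp [Φ₂, g2, Finsupp.linearCombination_single]
    have h1 : dilProd π₁ a (V₁ h) = Φ₁ (Finsupp.single (a, h) 1) := by
      simp [Φ₁, g1, Finsupp.linearCombination_single]
    rw [h2, h1]
    exact hTΦ _
  have hTnorm : ‖T‖ ≤ 1 := by
    refine ContinuousLinearMap.opNorm_le_bound T zero_le_one ?_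
    have hcl : IsClosed {ξ : K₂ | ‖T ξ‖ ≤ 1 * ‖ξ‖} :=
      isClosed_le (continuous_norm.comp T.continuous) (continuous_const.mul continuous_norm)
    exact isClosed_property h_d hcl fun x => by
      rw [show T (eE x) = f x from ContinuousLinearMap.extend_eq f h_d h_e x]
      exact hT₀bound x
  have hTV : ∀ h : H, T (V₂ h) = V₁ h := by
    intro h
    have h2 : V₂ h = dilProd π₂ (fun _ => 1) (V₂ h) := by rw [dilProd_one hrep₂]; rfl
    rw [h2, hTgen, dilProd_one hrep₁]
    rfl
  have hTcomm : ∀ (a : Fin (r + 1) → A) (ξ : K₂),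
      T (dilProd π₂ a ξ) = dilProd π₁ a (T ξ) := by
    intro a
    have heq : (T ∘L dilProd π₂ a) = (dilProd π₁ a ∘L T) := by
      refine ContinuousLinearMap.ext_on hds ?_
      rintro ξ ⟨b, h, rfl⟩
      show T (dilProd π₂ a (dilProd π₂ b (V₂ h))) = dilProd π₁ a (T (dilProd π₂ b (V₂ h)))
      have h3 : dilProd π₂ a (dilProd π₂ b (V₂ h)) =
          dilProd π₂ (fun p => a p * b p) (V₂ h) := by
        rw [← dilProd_mul hrep₂]; rfl
      rw [h3, hTgen, hTgen, ← dilProd_mul hrep₁]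
      rfl
    intro ξ
    exact DFunLike.congr_fun heq ξ
  refine ⟨T, ⟨hTnorm, hTV, hTcomm⟩, ?_⟩
  rintro T' ⟨hT'norm, hT'V, hT'comm⟩
  refine ContinuousLinearMap.ext_on hds ?_
  rintro ξ ⟨a, h, rfl⟩
  rw [hT'comm, hT'V, hTgen]
end

section
/- With (π₁,…,π_m, V, K) a Stinespring dilation of a symmetric invariant completely positive (2m−1)-linear map φ, and T ∈ ⋂_p π_p(A)′ with 0 ≤ T ≤ I, the map φ_T is completely positive: for all n, all a_{p,j} ∈ A and h_j ∈ H, Σ_{i,j=1}^n ⟨φ_T(a_{m,i}*,…, a_{2,i}*, a_{1,i}* a_{1,j}, a_{2,j},…, a_{m,j}) h_j, h_i⟩ ≥ 0. Moreover φ_T ≤ φ, i.e., φ − φ_T = φ_{I−T} is also completely positive. -/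
open scoped ComplexOrder

variable {A : Type*} [Ring A] [StarRing A] [Algebra ℂ A] [StarModule ℂ A]
variable {H : Type*} [NormedAddCommGroup H] [InnerProductSpace ℂ H] [CompleteSpace H]
variable {r : ℕ}

variable {K : Type*} [NormedAddCommGroup K] [InnerProductSpace ℂ K] [CompleteSpace K]

-- Merge two products of `n` factors when factors in distinct slots commute.
lemma prod_ofFn_mul_prod_ofFn {M : Type*} [Monoid M] :
    ∀ {n : ℕ} (f g : Fin n → M), (∀ p q, p ≠ q → Commute (f p) (g q)) →
      (List.ofFn f).prod * (List.ofFn g).prod = (List.ofFn fun p => f p * g p).prod := by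
  intro n
  induction n with
  | zero => simp
  | succ n ih =>
    intro f g hcomm
    have h1 : Commute (g 0) (List.ofFn fun i : Fin n => f i.succ).prod := by
      apply Commute.list_prod_right
      intro x hx
      simp only [List.mem_ofFn] at hx
      obtain ⟨i, rfl⟩ := hx
      exact ((hcomm i.succ 0 (Fin.succ_ne_zero i)).symm)
    have h2 : (List.ofFn fun i : Fin n => f i.succ).prod *
        (List.ofFn fun i : Fin n => g i.succ).prod =
        (List.ofFn fun i : Fin n => f i.succ * g i.succ).prod :=
      ih _ _ (fun p q h => hcomm p.succ q.succ (by simpa using h))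
    simp only [List.ofFn_succ, List.prod_cons]
    rw [mul_assoc, ← mul_assoc _ (g 0), ← h1.eq, mul_assoc, h2, ← mul_assoc]

/-- Star of a product of commuting factors. -/
lemma star_prod_ofFn {M : Type*} [Monoid M] [StarMul M] :
    ∀ {n : ℕ} (f : Fin n → M), (∀ p q, p ≠ q → Commute (f p) (f q)) →
      star (List.ofFn f).prod = (List.ofFn fun p => star (f p)).prod := by
  intro n
  induction n with
  | zero => simp
  | succ n ih =>
    intro f hcomm
    have h1 : Commute (star (f 0)) (List.ofFn fun i : Fin n => star (f i.succ)).prod := by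
      apply Commute.list_prod_right
      intro x hx
      simp only [List.mem_ofFn] at hx
      obtain ⟨i, rfl⟩ := hx
      exact (hcomm 0 i.succ (Fin.succ_ne_zero i).symm).star_star
    simp only [List.ofFn_succ, List.prod_cons, star_mul]
    rw [ih (fun i => f i.succ) (fun p q h => hcomm p.succ q.succ (by simpa using h)), h1.eq]

lemma commute_T_dilProd {K : Type*} [NormedAddCommGroup K] [InnerProductSpace ℂ K]
    [CompleteSpace K] (π : Fin (r + 1) → A → (K →L[ℂ] K)) (T : K →L[ℂ] K)
    (hT : InCommutant π T) (a : Fin (r + 1) → A) : Commute T (dilProd π a) := by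
  apply Commute.list_prod_right
  intro x hx
  simp only [List.mem_ofFn] at hx
  obtain ⟨i, rfl⟩ := hx
  exact hT i (a i)

/-- The key algebraic identity: the gram-arguments `dilOp` factors as `B† * A`. -/
lemma dilOp_gram_eq {K : Type*} [NormedAddCommGroup K] [InnerProductSpace ℂ K]
    [CompleteSpace K] (π : Fin (r + 1) → A → (K →L[ℂ] K)) (hrep : IsRepFamily π)
    (a b : Fin (r + 1) → A) :
    dilOp π (fun i => star (b i.rev.succ)) (star (b 0) * a 0) (fun i => a i.succ) =
      ContinuousLinearMap.adjoint (dilProd π b) * dilProd π a := by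
  obtain ⟨h1, hmul, hadd, hsmul, hstar, hcomm⟩ := hrep
  have key : dilOp π (fun i => star (b i.rev.succ)) (star (b 0) * a 0) (fun i => a i.succ) =
      (List.ofFn fun p : Fin (r + 1) => π p (star (b p) * a p)).prod := by
    rw [dilOp]
    rw [List.ofFn_succ (f := fun p : Fin (r + 1) => π p (star (b p) * a p)), List.prod_cons]
    have e1 : (fun i : Fin r => π i.succ ((fun i : Fin r => star (b i.rev.succ)) i.rev *
        (fun i : Fin r => a i.succ) i)) =
        fun i : Fin r => (fun p : Fin (r + 1) => π p (star (b p) * a p)) i.succ := by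
      funext i
      simp only [Fin.rev_rev]
    rw [e1]
  rw [key]
  have hfun : (fun p : Fin (r + 1) => π p (star (b p) * a p)) =
      fun p => π p (star (b p)) * π p (a p) := funext fun p => hmul p _ _
  have hsfun : (fun p : Fin (r + 1) => star (π p (b p))) =
      fun p => π p (star (b p)) := funext fun p => (hstar p _).symm
  rw [hfun, ← prod_ofFn_mul_prod_ofFn _ _ (fun p q h => hcomm p q _ _ h),
    ← ContinuousLinearMap.star_eq_adjoint, dilProd,
    star_prod_ofFn _ (fun p q h => hcomm p q _ _ h), hsfun]
  rfl

/-- In `ComplexOrder`, a positive operator has nonnegative quadratic form. -/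
lemma isPositive_inner_nonneg {K : Type*} [NormedAddCommGroup K] [InnerProductSpace ℂ K]
    [CompleteSpace K] {T : K →L[ℂ] K} (hT : T.IsPositive) (x : K) :
    (0 : ℂ) ≤ inner ℂ x (T x) := by
  have hsa := hT.isSelfAdjoint
  have hconj : (starRingEnd ℂ) (inner ℂ x (T x) : ℂ) = inner ℂ x (T x) := by
    have hadj : ContinuousLinearMap.adjoint T = T :=
      ContinuousLinearMap.isSelfAdjoint_iff'.mp hsa
    calc (starRingEnd ℂ) (inner ℂ x (T x) : ℂ) = inner ℂ (T x) x := inner_conj_symm _ _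
      _ = inner ℂ (ContinuousLinearMap.adjoint T x) x := by rw [hadj]
      _ = inner ℂ x (T x) := ContinuousLinearMap.adjoint_inner_left T x x
  have him := congrArg Complex.im hconj
  rw [Complex.conj_im] at him
  rw [Complex.nonneg_iff]
  refine ⟨by simpa using hT.re_inner_nonneg_right x, by linarith⟩

/-- gram of `phiT` as an inner product in the dilation space. -/
lemma gram_phiT_eq {K : Type*} [NormedAddCommGroup K] [InnerProductSpace ℂ K]
    [CompleteSpace K] (π : Fin (r + 1) → A → (K →L[ℂ] K)) (hrep : IsRepFamily π)
    (V : H →L[ℂ] K) (T : K →L[ℂ] K) (hT : InCommutant π T)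
    (a : Fin (r + 1) → A) (g : H) (b : Fin (r + 1) → A) (h : H) :
    gram (phiT π V T) a g b h =
      inner ℂ (dilProd π b (V h)) (T (dilProd π a (V g))) := by
  rw [gram, phiT, dilOp_gram_eq π hrep a b]
  have hcT : T * ContinuousLinearMap.adjoint (dilProd π b) =
      ContinuousLinearMap.adjoint (dilProd π b) * T := by
    have hc : Commute T (star (dilProd π b)) := by
      obtain ⟨h1, hmul, hadd, hsmul, hstar, hcomm⟩ := hrep
      have hsfun : (fun p : Fin (r + 1) => star (π p (b p))) =
          fun p => π p (star (b p)) := funext fun p => (hstar p _).symm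
      have hrw : star (dilProd π b) = (List.ofFn fun p => π p (star (b p))).prod := by
        rw [dilProd, star_prod_ofFn _ (fun p q h => hcomm p q _ _ h), hsfun]
      rw [hrw]
      exact commute_T_dilProd π T hT (fun p => star (b p))
    rw [← ContinuousLinearMap.star_eq_adjoint]
    exact hc.eq
  simp only [ContinuousLinearMap.comp_apply, ContinuousLinearMap.mul_apply]
  rw [ContinuousLinearMap.adjoint_inner_right]
  have : T ((ContinuousLinearMap.adjoint (dilProd π b)) (dilProd π a (V g))) =
      (ContinuousLinearMap.adjoint (dilProd π b)) (T (dilProd π a (V g))) := by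
    have := congrArg (fun S => S (dilProd π a (V g))) hcT
    simpa using this
  rw [this, ContinuousLinearMap.adjoint_inner_right]

/-- gram of `φ` itself as an inner product in the dilation space. -/
lemma gram_phi_eq {K : Type*} [NormedAddCommGroup K] [InnerProductSpace ℂ K]
    [CompleteSpace K] (φ : (Fin r → A) → A → (Fin r → A) → (H →L[ℂ] H))
    (π : Fin (r + 1) → A → (K →L[ℂ] K)) (hrep : IsRepFamily π)
    (V : H →L[ℂ] K) (hdil : IsDilation φ π V)
    (a : Fin (r + 1) → A) (g : H) (b : Fin (r + 1) → A) (h : H) :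
    gram φ a g b h = inner ℂ (dilProd π b (V h)) (dilProd π a (V g)) := by
  have : gram φ a g b h = gram (phiT π V 1 ) a g b h := by
    rw [gram, gram, hdil.2, phiT]
    simp
  rw [this, gram_phiT_eq π hrep V 1 (fun p c => Commute.one_left _) a g b h]
  simp

/-- For a Stinespring dilation `(π, V, K)` of a symmetric invariant completely positive
`(2m−1)`-linear map `φ` and `T ∈ ⋂_p π_p(A)′` with `0 ≤ T ≤ I`, the map `φ_T` is completely
positive, and moreover `φ_T ≤ φ`: the difference `φ − φ_T` is also completely positive. -/
theorem stmt15 (φ : (Fin r → A) → A → (Fin r → A) → (H →L[ℂ] H))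
    (hlin : IsMultilinearOdd φ) (hsymm : IsSymmMapOdd φ)
    (hinv : IsInvariantOdd φ) (hcp : IsCPOdd φ)
    (π : Fin (r + 1) → A → (K →L[ℂ] K)) (V : H →L[ℂ] K)
    (hrep : IsRepFamily π) (hdil : IsDilation φ π V) (hmin : IsMinimalDil π V)
    (T : K →L[ℂ] K) (hT : InCommutant π T)
    (hT0 : T.IsPositive) (hT1 : ((1 : K →L[ℂ] K) - T).IsPositive) :
    IsCPOdd (phiT π V T) ∧
    (∀ (n : ℕ) (a : Fin n → Fin (r + 1) → A) (g : Fin n → H),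
      0 ≤ ∑ j, ∑ i,
        (gram φ (a j) (g j) (a i) (g i) -
          gram (phiT π V T) (a j) (g j) (a i) (g i))) := by
  have key : ∀ (T' : K →L[ℂ] K), T'.IsPositive → InCommutant π T' →
      ∀ (n : ℕ) (a : Fin n → Fin (r + 1) → A) (g : Fin n → H),
        0 ≤ ∑ j, ∑ i, gram (phiT π V T') (a j) (g j) (a i) (g i) := by
    intro T' hpos hcomm n a g
    have heq : ∑ j, ∑ i, gram (phiT π V T') (a j) (g j) (a i) (g i) =
        inner ℂ (∑ i, dilProd π (a i) (V (g i)))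
          (T' (∑ j, dilProd π (a j) (V (g j)))) := by
      rw [map_sum, inner_sum]
      refine Finset.sum_congr rfl fun j _ => ?_
      rw [sum_inner]
      refine Finset.sum_congr rfl fun i _ => ?_
      exact gram_phiT_eq π hrep V T' hcomm (a j) (g j) (a i) (g i)
    rw [heq]
    exact isPositive_inner_nonneg hpos _
  have hcomm1 : InCommutant π ((1 : K →L[ℂ] K) - T) :=
    fun p c => (Commute.one_left (π p c)).sub_left (hT p c)
  constructor
  · exact fun n a g => key T hT0 hT n a g
  · intro n a g
    have hdiff : ∀ i j : Fin n,
        gram φ (a j) (g j) (a i) (g i) - gram (phiT π V T) (a j) (g j) (a i) (g i) =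
          gram (phiT π V ((1 : K →L[ℂ] K) - T)) (a j) (g j) (a i) (g i) := by
      intro i j
      rw [gram_phi_eq φ π hrep V hdil (a j) (g j) (a i) (g i),
        gram_phiT_eq π hrep V T hT (a j) (g j) (a i) (g i),
        gram_phiT_eq π hrep V _ hcomm1 (a j) (g j) (a i) (g i)]
      simp [inner_sub_right]
    calc (0 : ℂ) ≤ ∑ j, ∑ i, gram (phiT π V ((1 : K →L[ℂ] K) - T)) (a j) (g j) (a i) (g i) :=
          key _ hT1 hcomm1 n a g
      _ = ∑ j, ∑ i, (gram φ (a j) (g j) (a i) (g i) -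
            gram (phiT π V T) (a j) (g j) (a i) (g i)) := by
          refine Finset.sum_congr rfl fun j _ => Finset.sum_congr rfl fun i _ => ?_
          exact (hdiff i j).symm
end

section
/- Radon–Nikodým theorem: Let φ, ψ : A^{2m−1} → B(H) be symmetric invariant completely positive (2m−1)-linear maps with minimal Stinespring dilation (π₁,…,π_m, V, K) of φ. Then ψ ≤ φ (i.e., φ − ψ is completely positive) if and only if there exists a unique Δ ∈ ⋂_{p=1}^m π_p(A)′ with 0 ≤ Δ ≤ I such that ψ(a₁,…,a_{2m−1}) = V* Δ π₁(a_m) π₂(a_{m−1}a_{m+1}) ⋯ π_m(a₁a_{2m−1}) V for all a₁,…,a_{2m−1} ∈ A. -/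
open scoped ComplexOrder
set_option linter.unusedSectionVars false
set_option maxHeartbeats 1000000

variable {A : Type*} [Ring A] [StarRing A] [Algebra ℂ A] [StarModule ℂ A]
variable {H : Type*} [NormedAddCommGroup H] [InnerProductSpace ℂ H] [CompleteSpace H]
variable {r : ℕ}

variable {K : Type*} [NormedAddCommGroup K] [InnerProductSpace ℂ K] [CompleteSpace K]

/-! ### Auxiliary lemmas for the proof -/

section AuxProd

variable {M : Type*} [Monoid M]

lemma rn_ofFn_prod_one {n : ℕ} (f : Fin n → M) (hf : ∀ p, f p = 1) :
    (List.ofFn f).prod = 1 := by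
  refine List.prod_eq_one fun x hx => ?_
  obtain ⟨i, rfl⟩ := List.mem_ofFn.mp hx
  exact hf i

lemma rn_ofFn_prod_single {n : ℕ} (f : Fin n → M) (p : Fin n)
    (hf : ∀ q, q ≠ p → f q = 1) : (List.ofFn f).prod = f p := by
  induction n with
  | zero => exact absurd p.pos (by simp)
  | succ n ih =>
    rw [List.ofFn_succ, List.prod_cons]
    rcases Fin.eq_zero_or_eq_succ p with hp | ⟨j, rfl⟩
    · subst hp
      rw [rn_ofFn_prod_one _ fun i => hf i.succ (Fin.succ_ne_zero i), mul_one]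
    · rw [hf 0 (Fin.succ_ne_zero j).symm, one_mul]
      exact ih _ j fun q hq => hf q.succ (fun h => hq (Fin.succ_injective _ h))

lemma rn_ofFn_prod_mul_prod {n : ℕ} (f g : Fin n → M)
    (hc : ∀ p q, p ≠ q → Commute (f p) (g q)) :
    (List.ofFn f).prod * (List.ofFn g).prod = (List.ofFn fun p => f p * g p).prod := by
  induction n with
  | zero => simp
  | succ n ih =>
    rw [List.ofFn_succ, List.ofFn_succ, List.ofFn_succ (f := fun p => f p * g p),
      List.prod_cons, List.prod_cons, List.prod_cons]
    have h1 : Commute ((List.ofFn fun i : Fin n => f i.succ).prod) (g 0) := by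
      refine Commute.list_prod_left _ _ fun x hx => ?_
      obtain ⟨i, rfl⟩ := List.mem_ofFn.mp hx
      exact hc i.succ 0 (Fin.succ_ne_zero i)
    have ih' := ih (fun i => f i.succ) (fun i => g i.succ)
      (fun p q hpq => hc p.succ q.succ (fun h => hpq (Fin.succ_injective _ h)))
    calc f 0 * (List.ofFn fun i : Fin n => f i.succ).prod *
          (g 0 * (List.ofFn fun i : Fin n => g i.succ).prod)
        = f 0 * (((List.ofFn fun i : Fin n => f i.succ).prod * g 0) *
            (List.ofFn fun i : Fin n => g i.succ).prod) := by
          simp only [mul_assoc]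
      _ = f 0 * ((g 0 * (List.ofFn fun i : Fin n => f i.succ).prod) *
            (List.ofFn fun i : Fin n => g i.succ).prod) := by rw [h1.eq]
      _ = f 0 * g 0 * ((List.ofFn fun i : Fin n => f i.succ).prod *
            (List.ofFn fun i : Fin n => g i.succ).prod) := by simp only [mul_assoc]
      _ = f 0 * g 0 * (List.ofFn fun i : Fin n => f i.succ * g i.succ).prod := by rw [ih']

lemma rn_ofFn_prod_star {M : Type*} [Monoid M] [StarMul M] {n : ℕ} (f : Fin n → M)
    (hc : ∀ p q, p ≠ q → Commute (f p) (f q)) :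
    star ((List.ofFn f).prod) = (List.ofFn fun p => star (f p)).prod := by
  induction n with
  | zero => simp
  | succ n ih =>
    rw [List.ofFn_succ, List.ofFn_succ (f := fun p => star (f p)), List.prod_cons, List.prod_cons,
      star_mul, ih (fun i => f i.succ)
        (fun p q hpq => hc p.succ q.succ (fun h => hpq (Fin.succ_injective _ h)))]
    have h1 : Commute ((List.ofFn fun i : Fin n => star (f i.succ)).prod) (star (f 0)) := by
      refine Commute.list_prod_left _ _ fun x hx => ?_
      obtain ⟨i, rfl⟩ := List.mem_ofFn.mp hx
      have := (hc 0 i.succ (Fin.succ_ne_zero i).symm).eq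
      show star (f i.succ) * star (f 0) = star (f 0) * star (f i.succ)
      rw [← star_mul, ← star_mul, this]
    exact h1.eq

end AuxProd

section AuxDil

variable {π : Fin (r + 1) → A → (K →L[ℂ] K)}

lemma rn_dilProd_mul (hrep : IsRepFamily π) (u a : Fin (r + 1) → A) :
    dilProd π u * dilProd π a = dilProd π (fun q => u q * a q) := by
  unfold dilProd
  have h1 : (List.ofFn fun p => π p (u p * a p)) =
      List.ofFn fun p => π p (u p) * π p (a p) := by
    congr 1; funext p; rw [hrep.2.1 p]
  rw [h1]
  exact rn_ofFn_prod_mul_prod _ _ fun p q hpq => hrep.2.2.2.2.2 p q _ _ hpq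

lemma rn_dilProd_adjoint (hrep : IsRepFamily π) (b : Fin (r + 1) → A) :
    ContinuousLinearMap.adjoint (dilProd π b) = dilProd π (fun q => star (b q)) := by
  rw [← ContinuousLinearMap.star_eq_adjoint]
  unfold dilProd
  rw [rn_ofFn_prod_star _ fun p q hpq => hrep.2.2.2.2.2 p q _ _ hpq]
  simp only [hrep.2.2.2.2.1]

lemma rn_dilProd_one (hrep : IsRepFamily π) : dilProd π (fun _ => (1 : A)) = 1 := by
  unfold dilProd
  exact rn_ofFn_prod_one _ fun p => hrep.1 p

lemma rn_dilProd_slot (hrep : IsRepFamily π) (p : Fin (r + 1)) (c : A)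
    (a : Fin (r + 1) → A) :
    π p c * dilProd π a = dilProd π (mulSlot p c a) := by
  have h1 : dilProd π (Function.update (fun _ => (1 : A)) p c) = π p c := by
    unfold dilProd
    have h2 : ∀ q, q ≠ p → π q (Function.update (fun _ => (1 : A)) p c q) = 1 := by
      intro q hq
      rw [Function.update_of_ne hq]
      exact hrep.1 q
    rw [rn_ofFn_prod_single _ p h2, Function.update_self]
  rw [← h1, rn_dilProd_mul hrep]
  congr 1
  funext q
  unfold mulSlot
  rcases eq_or_ne q p with rfl | hq
  · rw [Function.update_self, Function.update_self]
  · rw [Function.update_of_ne hq, Function.update_of_ne hq, one_mul]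

lemma rn_dilOp_eq (y : A) (x z : Fin r → A) :
    dilOp π x y z = dilProd π (Fin.cons y fun i => x i.rev * z i) := by
  unfold dilOp dilProd
  rw [List.ofFn_succ, List.prod_cons]
  simp only [Fin.cons_zero, Fin.cons_succ]

end AuxDil

/-- The elementary vector `π₁(a₁)⋯π_m(a_m) V h` associated to a pair `(a, h)`. -/
noncomputable def rnXi (π : Fin (r + 1) → A → (K →L[ℂ] K)) (V : H →L[ℂ] K)
    (p : (Fin (r + 1) → A) × H) : K := dilProd π p.1 (V p.2)

section AuxGram

variable {π : Fin (r + 1) → A → (K →L[ℂ] K)} {V : H →L[ℂ] K}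

lemma rn_commutant_dilProd {T : K →L[ℂ] K} (hT : InCommutant π T)
    (b : Fin (r + 1) → A) : Commute T (dilProd π b) := by
  unfold dilProd
  refine Commute.list_prod_right _ _ fun x hx => ?_
  obtain ⟨i, rfl⟩ := List.mem_ofFn.mp hx
  exact hT i (b i)

lemma rn_gram_phiT (hrep : IsRepFamily π) {T : K →L[ℂ] K} (hT : InCommutant π T)
    (a : Fin (r + 1) → A) (g : H) (b : Fin (r + 1) → A) (h : H) :
    gram (phiT π V T) a g b h = inner ℂ (rnXi π V (b, h)) (T (rnXi π V (a, g))) := by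
  unfold gram phiT rnXi
  have hdo : dilOp π (fun i => star (b i.rev.succ)) (star (b 0) * a 0) (fun i => a i.succ)
      = dilProd π (fun q => star (b q)) * dilProd π a := by
    rw [rn_dilOp_eq, rn_dilProd_mul hrep]
    congr 1
    funext q
    refine Fin.cases ?_ (fun i => ?_) q
    · rw [Fin.cons_zero]
    · rw [Fin.cons_succ, Fin.rev_rev]
  rw [hdo]
  have hswap : ∀ w, T (dilProd π (fun q => star (b q)) w)
      = dilProd π (fun q => star (b q)) (T w) := by
    intro w
    rw [← ContinuousLinearMap.mul_apply, (rn_commutant_dilProd hT _).eq,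
      ContinuousLinearMap.mul_apply]
  simp only [ContinuousLinearMap.comp_apply, ContinuousLinearMap.mul_apply]
  rw [ContinuousLinearMap.adjoint_inner_right, hswap, ← rn_dilProd_adjoint hrep b,
    ContinuousLinearMap.adjoint_inner_right]

lemma rn_gram_phi {φ : (Fin r → A) → A → (Fin r → A) → (H →L[ℂ] H)}
    (hrep : IsRepFamily π) (hdil : IsDilation φ π V)
    (a : Fin (r + 1) → A) (g : H) (b : Fin (r + 1) → A) (h : H) :
    gram φ a g b h = inner ℂ (rnXi π V (b, h)) (rnXi π V (a, g)) := by
  have hphi : φ = phiT π V 1 := by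
    funext x y z
    rw [hdil.2]
    unfold phiT
    rw [ContinuousLinearMap.one_def, ContinuousLinearMap.id_comp]
  rw [hphi, rn_gram_phiT hrep fun p a => Commute.one_left _]
  simp

lemma rn_xi_slot (hrep : IsRepFamily π) (p : Fin (r + 1)) (c : A)
    (a : Fin (r + 1) → A) (g : H) :
    π p c (rnXi π V (a, g)) = rnXi π V (mulSlot p c a, g) := by
  unfold rnXi
  rw [← rn_dilProd_slot hrep, ContinuousLinearMap.mul_apply]

lemma rn_xi_smul (c : ℂ) (a : Fin (r + 1) → A) (g : H) :
    rnXi π V (a, c • g) = c • rnXi π V (a, g) := by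
  unfold rnXi
  rw [map_smul, map_smul]

end AuxGram

section AuxGramPsi

variable {ψ : (Fin r → A) → A → (Fin r → A) → (H →L[ℂ] H)}

lemma rn_gram_smul_right (c : ℂ) (a : Fin (r + 1) → A) (g : H) (b : Fin (r + 1) → A)
    (h : H) : gram ψ a (c • g) b h = c * gram ψ a g b h := by
  unfold gram
  rw [map_smul, inner_smul_right]

lemma rn_gram_smul_left (c : ℂ) (a : Fin (r + 1) → A) (g : H) (b : Fin (r + 1) → A)
    (h : H) : gram ψ a g b (c • h) = (starRingEnd ℂ) c * gram ψ a g b h := by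
  unfold gram
  rw [inner_smul_left]

lemma rn_gram_herm (hsymmψ : IsSymmMapOdd ψ) (a : Fin (r + 1) → A) (g : H)
    (b : Fin (r + 1) → A) (h : H) :
    gram ψ a g b h = (starRingEnd ℂ) (gram ψ b h a g) := by
  unfold gram
  rw [← inner_conj_symm]
  congr 1
  rw [← ContinuousLinearMap.adjoint_inner_right, ← ContinuousLinearMap.star_eq_adjoint,
    hsymmψ]
  have e1 : (fun i => star (star (b i.rev.rev.succ))) = fun i : Fin r => b i.succ := by
    funext i; rw [Fin.rev_rev, star_star]
  have e2 : star (star (b 0) * a 0) = star (a 0) * b 0 := by rw [star_mul, star_star]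
  rw [e1, e2]

lemma rn_gram_slot (hinvψ : IsInvariantOdd ψ) (p : Fin (r + 1)) (c : A)
    (a : Fin (r + 1) → A) (g : H) (b : Fin (r + 1) → A) (h : H) :
    gram ψ (mulSlot p c a) g b h = gram ψ a g (mulSlot p (star c) b) h := by
  unfold gram mulSlot
  refine Fin.cases ?_ (fun i₀ => ?_) p
  · have ez : (fun i : Fin r => Function.update a 0 (c * a 0) i.succ)
        = fun i => a i.succ := by
      funext i; rw [Function.update_of_ne (Fin.succ_ne_zero i)]
    have ex : (fun i : Fin r =>
          star (Function.update b 0 (star c * b 0) i.rev.succ))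
        = fun i => star (b i.rev.succ) := by
      funext i; rw [Function.update_of_ne (Fin.succ_ne_zero i.rev)]
    rw [ez, ex, Function.update_self, Function.update_self]
    have ey : star (b 0) * (c * a 0) = star (star c * b 0) * a 0 := by
      rw [star_mul, star_star, mul_assoc]
    rw [ey]
  · have ey1 : Function.update a i₀.succ (c * a i₀.succ) 0 = a 0 :=
      Function.update_of_ne (Fin.succ_ne_zero i₀).symm _ _
    have ey2 : Function.update b i₀.succ (star c * b i₀.succ) 0 = b 0 :=
      Function.update_of_ne (Fin.succ_ne_zero i₀).symm _ _
    set c' : Fin r → A := Function.update (fun _ => (1 : A)) i₀.rev c with hc'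
    have ez : (fun i : Fin r => Function.update a i₀.succ (c * a i₀.succ) i.succ)
        = fun i => c' i.rev * a i.succ := by
      funext i
      rcases eq_or_ne i i₀ with rfl | hi
      · rw [Function.update_self, hc', Function.update_self]
      · rw [Function.update_of_ne (by simpa [Fin.succ_inj] using hi), hc',
          Function.update_of_ne (by simpa [Fin.rev_inj] using hi), one_mul]
    have ex : (fun i : Fin r =>
          star (Function.update b i₀.succ (star c * b i₀.succ) i.rev.succ))
        = fun i => star (b i.rev.succ) * c' i := by
      funext i
      rcases eq_or_ne i i₀.rev with rfl | hi
      · rw [Fin.rev_rev, Function.update_self, star_mul, star_star, hc',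
          Function.update_self]
      · have h1 : i.rev.succ ≠ i₀.succ := fun hq =>
          hi (by rw [← Fin.succ_inj.mp hq, Fin.rev_rev])
        rw [Function.update_of_ne h1, hc', Function.update_of_ne hi, mul_one]
    rw [ey1, ey2, ez, ex]
    have hh := hinvψ (fun i => star (b i.rev.succ)) c' (star (b 0) * a 0)
      (fun i => a i.succ)
    exact congrArg (fun T : H →L[ℂ] H => (inner ℂ h (T g) : ℂ)) hh.symm

end AuxGramPsi

lemma rn_eq_re_of_nonneg {z : ℂ} (h : 0 ≤ z) : z = (z.re : ℂ) := by
  obtain ⟨h1, h2⟩ := Complex.nonneg_iff.mp h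
  apply Complex.ext <;> simp [← h2]

/-- The Gram-type quadratic sum of a finite family of elementary-tensor data. -/
noncomputable def rnQ (ψ : (Fin r → A) → A → (Fin r → A) → (H →L[ℂ] H))
    {n : ℕ} (p : Fin n → ((Fin (r + 1) → A) × H)) : ℂ :=
  ∑ j, ∑ i, gram ψ (p j).1 (p j).2 (p i).1 (p i).2

/-- The Gram-type bilinear pairing of two finite families. -/
noncomputable def rnB (ψ : (Fin r → A) → A → (Fin r → A) → (H →L[ℂ] H))
    {n m : ℕ} (p : Fin n → ((Fin (r + 1) → A) × H))
    (q : Fin m → ((Fin (r + 1) → A) × H)) : ℂ :=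
  ∑ j, ∑ i, gram ψ (p j).1 (p j).2 (q i).1 (q i).2

section AuxCP

variable {π : Fin (r + 1) → A → (K →L[ℂ] K)} {V : H →L[ℂ] K}
variable {φ ψ : (Fin r → A) → A → (Fin r → A) → (H →L[ℂ] H)}

lemma rn_rnQ_nonneg (hcpψ : IsCPOdd ψ) {n : ℕ}
    (p : Fin n → ((Fin (r + 1) → A) × H)) : 0 ≤ rnQ ψ p :=
  hcpψ n (fun k => (p k).1) (fun k => (p k).2)

lemma rn_rnQ_phi (hrep : IsRepFamily π) (hdil : IsDilation φ π V) {n : ℕ}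
    (p : Fin n → ((Fin (r + 1) → A) × H)) :
    rnQ φ p = ((‖∑ i, rnXi π V (p i)‖ : ℝ) : ℂ) ^ 2 := by
  unfold rnQ
  have h1 : ∀ j i : Fin n, gram φ (p j).1 (p j).2 (p i).1 (p i).2
      = inner ℂ (rnXi π V (p i)) (rnXi π V (p j)) := fun j i => by
    rw [rn_gram_phi hrep hdil]
  simp_rw [h1, ← sum_inner]
  rw [← inner_sum, inner_self_eq_norm_sq_to_K]
  norm_cast

lemma rn_rnQ_le
    (hdom : ∀ (n : ℕ) (a : Fin n → Fin (r + 1) → A) (g : Fin n → H),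
        0 ≤ ∑ j, ∑ i,
          (gram φ (a j) (g j) (a i) (g i) - gram ψ (a j) (g j) (a i) (g i)))
    (hrep : IsRepFamily π) (hdil : IsDilation φ π V) {n : ℕ}
    (p : Fin n → ((Fin (r + 1) → A) × H)) :
    rnQ ψ p ≤ ((‖∑ i, rnXi π V (p i)‖ : ℝ) : ℂ) ^ 2 := by
  have h1 := hdom n (fun k => (p k).1) (fun k => (p k).2)
  simp only [Finset.sum_sub_distrib] at h1
  rw [sub_nonneg] at h1
  calc rnQ ψ p ≤ rnQ φ p := h1
    _ = _ := rn_rnQ_phi hrep hdil p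

lemma rn_rnB_conj (hsymmψ : IsSymmMapOdd ψ) {n m : ℕ}
    (p : Fin n → ((Fin (r + 1) → A) × H)) (q : Fin m → ((Fin (r + 1) → A) × H)) :
    rnB ψ q p = (starRingEnd ℂ) (rnB ψ p q) := by
  unfold rnB
  rw [map_sum, Finset.sum_comm]
  congr 1; funext j
  rw [map_sum]
  congr 1; funext i
  rw [rn_gram_herm hsymmψ]

lemma rn_expand (c : ℂ) {n m : ℕ}
    (p : Fin n → ((Fin (r + 1) → A) × H)) (q : Fin m → ((Fin (r + 1) → A) × H)) :
    rnQ ψ (Fin.append p (fun j => ((q j).1, c • (q j).2)))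
      = rnQ ψ p + (starRingEnd ℂ) c * rnB ψ p q + c * rnB ψ q p
        + c * (starRingEnd ℂ) c * rnQ ψ q := by
  unfold rnQ rnB
  rw [Fin.sum_univ_add]
  simp only [Fin.sum_univ_add, Fin.append_left, Fin.append_right,
    rn_gram_smul_right, rn_gram_smul_left, Finset.sum_add_distrib, ← Finset.mul_sum]
  ring

lemma rn_cs (hcpψ : IsCPOdd ψ) (hsymmψ : IsSymmMapOdd ψ) {n m : ℕ}
    (p : Fin n → ((Fin (r + 1) → A) × H)) (q : Fin m → ((Fin (r + 1) → A) × H)) :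
    Complex.normSq (rnB ψ p q) ≤ (rnQ ψ p).re * (rnQ ψ q).re := by
  set β := rnB ψ p q with hβ
  set N := Complex.normSq β with hN
  set P0 := (rnQ ψ p).re with hP0def
  set Q0 := (rnQ ψ q).re with hQ0def
  have hp0 := rn_rnQ_nonneg hcpψ p
  have hq0 := rn_rnQ_nonneg hcpψ q
  have hP0 : rnQ ψ p = (P0 : ℂ) := by rw [hP0def]; exact rn_eq_re_of_nonneg hp0
  have hQ0 : rnQ ψ q = (Q0 : ℂ) := by rw [hQ0def]; exact rn_eq_re_of_nonneg hq0
  have hP0re : 0 ≤ P0 := (Complex.nonneg_iff.mp hp0).1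
  have hQ0re : 0 ≤ Q0 := (Complex.nonneg_iff.mp hq0).1
  have key : ∀ t : ℝ, 0 ≤ P0 - 2 * t * N + t ^ 2 * N * Q0 := by
    intro t
    have h0 := rn_rnQ_nonneg hcpψ (Fin.append p fun j => ((q j).1, (-((t : ℂ) * β)) • (q j).2))
    rw [rn_expand, rn_rnB_conj hsymmψ p q, ← hβ] at h0
    have e2 : rnQ ψ p + (starRingEnd ℂ) (-((t : ℂ) * β)) * β
        + (-((t : ℂ) * β)) * (starRingEnd ℂ) β
        + (-((t : ℂ) * β)) * (starRingEnd ℂ) (-((t : ℂ) * β)) * rnQ ψ q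
        = ((P0 - 2 * t * N + t ^ 2 * N * Q0 : ℝ) : ℂ) := by
      rw [hP0, hQ0, hN]
      push_cast
      simp only [map_neg, map_mul, Complex.conj_ofReal, ← Complex.mul_conj]
      ring
    rw [e2] at h0
    exact_mod_cast h0
  rcases eq_or_lt_of_le hQ0re with hQ | hQ
  · rw [← hQ, mul_zero]
    by_contra hcon
    push_neg at hcon
    have hNne : N ≠ 0 := ne_of_gt hcon
    have h1 := key ((P0 + 1) / (2 * N))
    rw [← hQ, mul_zero, add_zero] at h1
    have h2 : 2 * ((P0 + 1) / (2 * N)) * N = P0 + 1 := by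
      field_simp
    rw [h2] at h1
    linarith
  · have h1 := key (1 / Q0)
    have hne : Q0 ≠ 0 := ne_of_gt hQ
    have e : (P0 - 2 * (1 / Q0) * N + (1 / Q0) ^ 2 * N * Q0) * Q0
        = P0 * Q0 - N := by
      field_simp
      ring
    have h3 := mul_nonneg h1 hQ.le
    rw [e] at h3
    linarith

end AuxCP

section AuxSpan

variable {π : Fin (r + 1) → A → (K →L[ℂ] K)} {V : H →L[ℂ] K}

lemma rn_span_rep (u : K)
    (hu : u ∈ Submodule.span ℂ
      {ξ : K | ∃ (a : Fin (r + 1) → A) (h : H), ξ = dilProd π a (V h)}) :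
    ∃ (n : ℕ) (p : Fin n → ((Fin (r + 1) → A) × H)), u = ∑ i, rnXi π V (p i) := by
  refine Submodule.span_induction ?_ ?_ ?_ ?_ hu
  · rintro x ⟨a, h, rfl⟩
    exact ⟨1, fun _ => (a, h), by simp [rnXi]⟩
  · exact ⟨0, Fin.elim0, by simp⟩
  · rintro x y - - ⟨n, p, rfl⟩ ⟨m, q, rfl⟩
    refine ⟨n + m, Fin.append p q, ?_⟩
    rw [Fin.sum_univ_add]
    congr 1
    · exact Finset.sum_congr rfl fun i _ => by rw [Fin.append_left]
    · exact Finset.sum_congr rfl fun i _ => by rw [Fin.append_right]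
  · rintro c x - ⟨n, p, rfl⟩
    refine ⟨n, fun i => ((p i).1, c • (p i).2), ?_⟩
    simp only [rn_xi_smul]
    rw [← Finset.smul_sum]

lemma rn_sum_mem_span {n : ℕ} (p : Fin n → ((Fin (r + 1) → A) × H)) :
    (∑ i, rnXi π V (p i)) ∈ Submodule.span ℂ
      {ξ : K | ∃ (a : Fin (r + 1) → A) (h : H), ξ = dilProd π a (V h)} :=
  Submodule.sum_mem _ fun i _ =>
    Submodule.subset_span ⟨(p i).1, (p i).2, rfl⟩

end AuxSpan

section AuxB

variable {ψ : (Fin r → A) → A → (Fin r → A) → (H →L[ℂ] H)}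

lemma rn_rnB_append_left {n n' m : ℕ} (p : Fin n → ((Fin (r + 1) → A) × H))
    (p' : Fin n' → ((Fin (r + 1) → A) × H)) (q : Fin m → ((Fin (r + 1) → A) × H)) :
    rnB ψ (Fin.append p p') q = rnB ψ p q + rnB ψ p' q := by
  unfold rnB
  rw [Fin.sum_univ_add]
  simp only [Fin.append_left, Fin.append_right]

lemma rn_rnB_smul_left (c : ℂ) {n m : ℕ} (p : Fin n → ((Fin (r + 1) → A) × H))
    (q : Fin m → ((Fin (r + 1) → A) × H)) :
    rnB ψ (fun i => ((p i).1, c • (p i).2)) q = c * rnB ψ p q := by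
  unfold rnB
  simp only [rn_gram_smul_right, ← Finset.mul_sum]

lemma rn_rnB_append_right {n m m' : ℕ} (p : Fin n → ((Fin (r + 1) → A) × H))
    (q : Fin m → ((Fin (r + 1) → A) × H)) (q' : Fin m' → ((Fin (r + 1) → A) × H)) :
    rnB ψ p (Fin.append q q') = rnB ψ p q + rnB ψ p q' := by
  unfold rnB
  simp only [Fin.sum_univ_add, Fin.append_left, Fin.append_right,
    Finset.sum_add_distrib]

lemma rn_rnB_smul_right (c : ℂ) {n m : ℕ} (p : Fin n → ((Fin (r + 1) → A) × H))
    (q : Fin m → ((Fin (r + 1) → A) × H)) :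
    rnB ψ p (fun i => ((q i).1, c • (q i).2)) = (starRingEnd ℂ) c * rnB ψ p q := by
  unfold rnB
  simp only [rn_gram_smul_left, ← Finset.mul_sum]

lemma rn_rnB_diag {n : ℕ} (p : Fin n → ((Fin (r + 1) → A) × H)) :
    rnB ψ p p = rnQ ψ p := rfl

lemma rn_rnB_single (pa qb : ((Fin (r + 1) → A) × H)) :
    rnB ψ (fun _ : Fin 1 => pa) (fun _ : Fin 1 => qb)
      = gram ψ pa.1 pa.2 qb.1 qb.2 := by
  unfold rnB
  simp

end AuxB

section AuxPos

variable {K : Type*} [NormedAddCommGroup K] [InnerProductSpace ℂ K] [CompleteSpace K]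

lemma rn_inner_nonneg_of_isPositive {T : K →L[ℂ] K} (hT : T.IsPositive) (x : K) :
    0 ≤ (inner ℂ x (T x) : ℂ) := by
  obtain ⟨h1, h2⟩ := (ContinuousLinearMap.isPositive_iff_complex T).mp hT x
  rw [← inner_conj_symm, ← h1]
  simp only [RCLike.re_to_complex] at h2 ⊢
  rw [Complex.conj_ofReal]
  exact Complex.zero_le_real.mpr h2

lemma rn_isPositive_of_inner_nonneg {T : K →L[ℂ] K}
    (h : ∀ x : K, 0 ≤ (inner ℂ x (T x) : ℂ)) : T.IsPositive := by
  rw [ContinuousLinearMap.isPositive_iff_complex]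
  intro x
  have hz := rn_eq_re_of_nonneg (h x)
  have h1 : 0 ≤ ((inner ℂ x (T x) : ℂ)).re := (Complex.nonneg_iff.mp (h x)).1
  have h3 : (inner ℂ (T x) x : ℂ) = (((inner ℂ x (T x) : ℂ).re : ℝ) : ℂ) := by
    conv_lhs => rw [← inner_conj_symm, hz, Complex.conj_ofReal]
  constructor
  · rw [h3]
    simp [RCLike.re_to_complex]
  · rw [h3]
    simpa [RCLike.ofReal_re] using h1

end AuxPos

/-- Radon–Nikodým theorem: let `φ, ψ` be symmetric invariant completely positive
`(2m−1)`-linear maps and `(π, V, K)` a minimal Stinespring dilation of `φ`.  Then `ψ ≤ φ`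
(i.e. `φ − ψ` is completely positive) iff there is a unique `Δ ∈ ⋂_p π_p(A)′` with
`0 ≤ Δ ≤ I` such that `ψ(a₁,…,a_{2m−1}) = V* Δ π₁(a_m)π₂(a_{m−1}a_{m+1})⋯π_m(a₁a_{2m−1})V`. -/
theorem stmt16 (φ ψ : (Fin r → A) → A → (Fin r → A) → (H →L[ℂ] H))
    (hlinφ : IsMultilinearOdd φ) (hsymmφ : IsSymmMapOdd φ)
    (hinvφ : IsInvariantOdd φ) (hcpφ : IsCPOdd φ)
    (hlinψ : IsMultilinearOdd ψ) (hsymmψ : IsSymmMapOdd ψ)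
    (hinvψ : IsInvariantOdd ψ) (hcpψ : IsCPOdd ψ)
    (π : Fin (r + 1) → A → (K →L[ℂ] K)) (V : H →L[ℂ] K)
    (hrep : IsRepFamily π) (hdil : IsDilation φ π V) (hmin : IsMinimalDil π V) :
    (∀ (n : ℕ) (a : Fin n → Fin (r + 1) → A) (g : Fin n → H),
        0 ≤ ∑ j, ∑ i,
          (gram φ (a j) (g j) (a i) (g i) - gram ψ (a j) (g j) (a i) (g i))) ↔
      ∃! Δ : K →L[ℂ] K,
        InCommutant π Δ ∧ Δ.IsPositive ∧ ((1 : K →L[ℂ] K) - Δ).IsPositive ∧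
          ∀ (x : Fin r → A) (y : A) (z : Fin r → A), ψ x y z = phiT π V Δ x y z := by
  classical
  set SP : Submodule ℂ K := Submodule.span ℂ
    {ξ : K | ∃ (a : Fin (r + 1) → A) (h : H), ξ = dilProd π a (V h)} with hSPdef
  have hdense : Dense (SP : Set K) :=
    Submodule.dense_iff_topologicalClosure_eq_top.mpr hmin
  have horth : SPᗮ = ⊥ := Submodule.topologicalClosure_eq_top_iff.mp hmin
  -- Extension principle: vectors agreeing against all elementary vectors are equal.
  have hext0 : ∀ x y : K,
      (∀ qb : (Fin (r + 1) → A) × H,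
        (inner ℂ (rnXi π V qb) x : ℂ) = inner ℂ (rnXi π V qb) y) → x = y := by
    intro x y hxy
    have hmem : x - y ∈ SPᗮ := by
      rw [Submodule.mem_orthogonal]
      intro u hu
      refine Submodule.span_induction ?_ ?_ ?_ ?_ hu
      · rintro w ⟨a, h, rfl⟩
        rw [inner_sub_right]
        exact sub_eq_zero.mpr (hxy (a, h))
      · rw [inner_zero_left]
      · intro w1 w2 _ _ h1 h2
        rw [inner_add_left, h1, h2, add_zero]
      · intro c w _ h1
        rw [inner_smul_left, h1, mul_zero]
    rw [horth, Submodule.mem_bot] at hmem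
    exact sub_eq_zero.mp hmem
  -- Extension principle for operators.
  have hgen_ext : ∀ T1 T2 : K →L[ℂ] K,
      (∀ pa qb : (Fin (r + 1) → A) × H,
        (inner ℂ (rnXi π V qb) (T1 (rnXi π V pa)) : ℂ)
          = inner ℂ (rnXi π V qb) (T2 (rnXi π V pa))) → T1 = T2 := by
    intro T1 T2 h12
    have heq : Set.EqOn ⇑T1 ⇑T2
        {ξ : K | ∃ (a : Fin (r + 1) → A) (h : H), ξ = dilProd π a (V h)} := by
      rintro w ⟨a, h, rfl⟩
      exact hext0 _ _ fun qb => h12 (a, h) qb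
    exact ContinuousLinearMap.ext_on hdense heq
  -- Any commutant operator representing `ψ` reproduces the `ψ`-Gram values.
  have hkey : ∀ T : K →L[ℂ] K, InCommutant π T →
      (∀ x y z, ψ x y z = phiT π V T x y z) →
      ∀ pa qb : (Fin (r + 1) → A) × H,
        (inner ℂ (rnXi π V qb) (T (rnXi π V pa)) : ℂ)
          = gram ψ pa.1 pa.2 qb.1 qb.2 := by
    intro T hTc hTψ pa qb
    obtain ⟨a, g⟩ := pa
    obtain ⟨b, h⟩ := qb
    rw [← rn_gram_phiT hrep hTc a g b h]
    unfold gram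
    rw [hTψ]
  constructor
  · -- Forward direction: construct Δ.
    intro hdom
    have hrepr : ∀ u : ↥SP, ∃ (n : ℕ) (p : Fin n → ((Fin (r + 1) → A) × H)),
        (u : K) = ∑ i, rnXi π V (p i) := fun u => rn_span_rep _ u.2
    choose nn pp hpp using hrepr
    -- degenerate families pair to zero
    have hzero : ∀ {n m : ℕ} (p : Fin n → ((Fin (r + 1) → A) × H))
        (q : Fin m → ((Fin (r + 1) → A) × H)),
        (∑ i, rnXi π V (p i)) = 0 → rnB ψ p q = 0 := by
      intro n m p q hp
      have h1 := rn_rnQ_le hdom hrep hdil p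
      rw [hp, norm_zero] at h1
      have h1' : rnQ ψ p ≤ 0 := by simpa using h1
      have h3 : rnQ ψ p = 0 := le_antisymm h1' (rn_rnQ_nonneg hcpψ p)
      have h4 := rn_cs hcpψ hsymmψ p q
      rw [h3] at h4
      simp only [Complex.zero_re, zero_mul] at h4
      exact Complex.normSq_eq_zero.mp (le_antisymm h4 (Complex.normSq_nonneg _))
    have hwd1 : ∀ {n n' m : ℕ} (p : Fin n → ((Fin (r + 1) → A) × H))
        (p' : Fin n' → ((Fin (r + 1) → A) × H)) (q : Fin m → ((Fin (r + 1) → A) × H)),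
        (∑ i, rnXi π V (p i)) = (∑ i, rnXi π V (p' i)) → rnB ψ p q = rnB ψ p' q := by
      intro n n' m p p' q hp
      have hsum : (∑ i, rnXi π V
          ((Fin.append p fun j => ((p' j).1, (-1 : ℂ) • (p' j).2)) i)) = 0 := by
        rw [Fin.sum_univ_add]
        simp only [Fin.append_left, Fin.append_right]
        have hneg : ∀ j, rnXi π V ((p' j).1, (-1 : ℂ) • (p' j).2) = -(rnXi π V (p' j)) := by
          intro j
          rw [rn_xi_smul]
          simp
        simp only [hneg]
        rw [Finset.sum_neg_distrib, hp]
        exact add_neg_cancel _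
      have hz := hzero (Fin.append p fun j => ((p' j).1, (-1 : ℂ) • (p' j).2)) q hsum
      rw [rn_rnB_append_left, rn_rnB_smul_left] at hz
      linear_combination hz
    have hwd : ∀ {n m n' m' : ℕ} (p : Fin n → ((Fin (r + 1) → A) × H))
        (q : Fin m → ((Fin (r + 1) → A) × H)) (p' : Fin n' → ((Fin (r + 1) → A) × H))
        (q' : Fin m' → ((Fin (r + 1) → A) × H)),
        (∑ i, rnXi π V (p i)) = (∑ i, rnXi π V (p' i)) →
        (∑ i, rnXi π V (q i)) = (∑ i, rnXi π V (q' i)) →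
        rnB ψ p q = rnB ψ p' q' := by
      intro n m n' m' p q p' q' hp hq
      have e1 : rnB ψ p q = rnB ψ p' q := hwd1 p p' q hp
      have e2 : rnB ψ p' q = rnB ψ p' q' := by
        rw [rn_rnB_conj hsymmψ q p', rn_rnB_conj hsymmψ q' p', hwd1 q q' p' hq]
      exact e1.trans e2
    set B : ↥SP → ↥SP → ℂ := fun u v => rnB ψ (pp u) (pp v) with hBdef
    have hBchar : ∀ (u v : ↥SP) {n m : ℕ} (p : Fin n → ((Fin (r + 1) → A) × H))
        (q : Fin m → ((Fin (r + 1) → A) × H)),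
        (u : K) = ∑ i, rnXi π V (p i) → (v : K) = ∑ i, rnXi π V (q i) →
        B u v = rnB ψ p q := by
      intro u v n m p q hu hv
      exact hwd (pp u) (pp v) p q ((hpp u).symm.trans hu) ((hpp v).symm.trans hv)
    set gx : ((Fin (r + 1) → A) × H) → ↥SP := fun pa =>
      (⟨rnXi π V pa, Submodule.subset_span ⟨pa.1, pa.2, rfl⟩⟩ : ↥SP) with hgxdef
    have hgx : ∀ pa, ((gx pa : ↥SP) : K) = ∑ i : Fin 1, rnXi π V ((fun _ => pa) i) := by
      intro pa
      simp
      rfl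
    have hBgen : ∀ pa qb, B (gx pa) (gx qb) = gram ψ pa.1 pa.2 qb.1 qb.2 := by
      intro pa qb
      rw [hBchar (gx pa) (gx qb) (fun _ : Fin 1 => pa) (fun _ : Fin 1 => qb)
        (hgx pa) (hgx qb), rn_rnB_single]
    have hBdiag_nonneg : ∀ u : ↥SP, 0 ≤ B u u := fun u => rn_rnQ_nonneg hcpψ (pp u)
    have hBdiag_le : ∀ u : ↥SP, B u u ≤ ((‖(u : K)‖ : ℝ) : ℂ) ^ 2 := by
      intro u
      have h := rn_rnQ_le hdom hrep hdil (pp u)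
      rw [← hpp u] at h
      exact h
    have hBadd1 : ∀ u w v : ↥SP, B (u + w) v = B u v + B w v := by
      intro u w v
      have hu : ((u + w : ↥SP) : K)
          = ∑ i, rnXi π V (Fin.append (pp u) (pp w) i) := by
        rw [Submodule.coe_add, hpp u, hpp w, Fin.sum_univ_add]
        simp only [Fin.append_left, Fin.append_right]
      rw [hBchar (u + w) v (Fin.append (pp u) (pp w)) (pp v) hu (hpp v),
        rn_rnB_append_left]
    have hBsmul1 : ∀ (c : ℂ) (u v : ↥SP), B (c • u) v = c * B u v := by
      intro c u v
      have hu : ((c • u : ↥SP) : K)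
          = ∑ i, rnXi π V ((fun i => ((pp u i).1, c • (pp u i).2)) i) := by
        rw [Submodule.coe_smul, hpp u, Finset.smul_sum]
        exact Finset.sum_congr rfl fun i _ => (rn_xi_smul c _ _).symm
      rw [hBchar (c • u) v (fun i => ((pp u i).1, c • (pp u i).2)) (pp v) hu (hpp v),
        rn_rnB_smul_left]
    have hBadd2 : ∀ u v w : ↥SP, B u (v + w) = B u v + B u w := by
      intro u v w
      have hv : ((v + w : ↥SP) : K)
          = ∑ i, rnXi π V (Fin.append (pp v) (pp w) i) := by
        rw [Submodule.coe_add, hpp v, hpp w, Fin.sum_univ_add]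
        simp only [Fin.append_left, Fin.append_right]
      rw [hBchar u (v + w) (pp u) (Fin.append (pp v) (pp w)) (hpp u) hv,
        rn_rnB_append_right]
    have hBsmul2 : ∀ (c : ℂ) (u v : ↥SP), B u (c • v) = (starRingEnd ℂ) c * B u v := by
      intro c u v
      have hv : ((c • v : ↥SP) : K)
          = ∑ i, rnXi π V ((fun i => ((pp v i).1, c • (pp v i).2)) i) := by
        rw [Submodule.coe_smul, hpp v, Finset.smul_sum]
        exact Finset.sum_congr rfl fun i _ => (rn_xi_smul c _ _).symm
      rw [hBchar u (c • v) (pp u) (fun i => ((pp v i).1, c • (pp v i).2)) (hpp u) hv,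
        rn_rnB_smul_right]
    have hBbound : ∀ u v : ↥SP, ‖B u v‖ ≤ ‖(u : K)‖ * ‖(v : K)‖ := by
      intro u v
      have h1 := rn_cs hcpψ hsymmψ (pp u) (pp v)
      have h2 : (rnQ ψ (pp u)).re ≤ ‖(u : K)‖ ^ 2 := by
        have h := rn_rnQ_le hdom hrep hdil (pp u)
        rw [← hpp u] at h
        have h3 := (Complex.le_def.mp h).1
        rwa [← Complex.ofReal_pow, Complex.ofReal_re] at h3
      have h2' : (rnQ ψ (pp v)).re ≤ ‖(v : K)‖ ^ 2 := by
        have h := rn_rnQ_le hdom hrep hdil (pp v)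
        rw [← hpp v] at h
        have h3 := (Complex.le_def.mp h).1
        rwa [← Complex.ofReal_pow, Complex.ofReal_re] at h3
      have hru : 0 ≤ (rnQ ψ (pp u)).re := (Complex.nonneg_iff.mp (rn_rnQ_nonneg hcpψ (pp u))).1
      have hrv : 0 ≤ (rnQ ψ (pp v)).re := (Complex.nonneg_iff.mp (rn_rnQ_nonneg hcpψ (pp v))).1
      have h4 : Complex.normSq (B u v) ≤ (‖(u : K)‖ * ‖(v : K)‖) ^ 2 := by
        calc Complex.normSq (B u v) ≤ (rnQ ψ (pp u)).re * (rnQ ψ (pp v)).re := h1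
          _ ≤ ‖(u : K)‖ ^ 2 * ‖(v : K)‖ ^ 2 :=
            mul_le_mul h2 h2' hrv (by positivity)
          _ = (‖(u : K)‖ * ‖(v : K)‖) ^ 2 := by ring
      have h5 : ‖B u v‖ ^ 2 ≤ (‖(u : K)‖ * ‖(v : K)‖) ^ 2 := by
        rw [← Complex.sq_norm] at h4
        exact h4
      nlinarith [norm_nonneg (B u v),
        mul_nonneg (norm_nonneg (u : K)) (norm_nonneg (v : K))]
    -- the bounded conjugate-functionals and the operator
    have hiso : Isometry (⇑(SP.subtypeL)) := fun a b => rfl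
    have hui := hiso.isUniformInducing
    have hdr : DenseRange ⇑(SP.subtypeL) := by
      have hr : Set.range ⇑(SP.subtypeL) = (SP : Set K) := Subtype.range_coe
      rw [DenseRange, hr]
      exact hdense
    set fu : ↥SP → (↥SP →L[ℂ] ℂ) := fun u => LinearMap.mkContinuous
      { toFun := fun v => (starRingEnd ℂ) (B u v)
        map_add' := fun v w => by
          show (starRingEnd ℂ) (B u (v + w))
            = (starRingEnd ℂ) (B u v) + (starRingEnd ℂ) (B u w)
          rw [hBadd2, map_add]
        map_smul' := fun c v => by
          show (starRingEnd ℂ) (B u (c • v)) = (RingHom.id ℂ) c • (starRingEnd ℂ) (B u v)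
          simp only [hBsmul2, map_mul, Complex.conj_conj, RingHom.id_apply, smul_eq_mul] }
      ‖(u : K)‖ (fun v => by
        show ‖(starRingEnd ℂ) (B u v)‖ ≤ ‖(u : K)‖ * ‖v‖
        rw [RCLike.norm_conj]
        exact hBbound u v) with hfudef
    set Fu : ↥SP → (K →L[ℂ] ℂ) := fun u => (fu u).extend SP.subtypeL with hFudef
    set D0 : ↥SP → K := fun u => (InnerProductSpace.toDual ℂ K).symm (Fu u) with hD0def
    have hD0inner : ∀ u v : ↥SP, (inner ℂ ((v : K)) (D0 u) : ℂ) = B u v := by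
      intro u v
      have h1 : (inner ℂ (D0 u) ((v : K)) : ℂ) = Fu u ↑v :=
        InnerProductSpace.toDual_symm_apply
      have h4 : Fu u ↑v = (starRingEnd ℂ) (B u v) :=
        ContinuousLinearMap.extend_eq (fu u) hdr hui v
      rw [← inner_conj_symm, h1, h4, Complex.conj_conj]
    have hD0gen : ∀ (u : ↥SP) (qb : (Fin (r + 1) → A) × H),
        (inner ℂ (rnXi π V qb) (D0 u) : ℂ) = B u (gx qb) := fun u qb => hD0inner u (gx qb)
    set Δ0 : ↥SP →L[ℂ] K := LinearMap.mkContinuous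
      { toFun := D0
        map_add' := fun u w => hext0 _ _ (fun qb => by
          rw [inner_add_right, hD0gen (u + w) qb, hD0gen u qb, hD0gen w qb, hBadd1])
        map_smul' := fun c u => hext0 _ _ (fun qb => by
          rw [inner_smul_right, hD0gen (c • u) qb, hD0gen u qb]
          simp only [RingHom.id_apply]
          rw [hBsmul1]) }
      1 (fun u => by
        rw [one_mul]
        have h1 : ‖D0 u‖ = ‖Fu u‖ :=
          LinearIsometryEquiv.norm_map (InnerProductSpace.toDual ℂ K).symm (Fu u)
        have h2 : ‖Fu u‖ ≤ (1 : NNReal) * ‖fu u‖ :=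
          ContinuousLinearMap.opNorm_extend_le (fu u) hdr
            (fun x => by rw [NNReal.coe_one, one_mul]; rfl)
        have h3 : ‖fu u‖ ≤ ‖(u : K)‖ :=
          LinearMap.mkContinuous_norm_le _ (norm_nonneg _) _
        calc ‖D0 u‖ = ‖Fu u‖ := h1
          _ ≤ (1 : NNReal) * ‖fu u‖ := h2
          _ = ‖fu u‖ := by rw [NNReal.coe_one, one_mul]
          _ ≤ ‖(u : K)‖ := h3) with hΔ0def
    set Δ : K →L[ℂ] K := Δ0.extend SP.subtypeL with hΔdef
    have hΔS : ∀ u : ↥SP, Δ ↑u = D0 u := fun u =>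
      ContinuousLinearMap.extend_eq Δ0 hdr hui u
    have hΔgen : ∀ pa qb : (Fin (r + 1) → A) × H,
        (inner ℂ (rnXi π V qb) (Δ (rnXi π V pa)) : ℂ) = gram ψ pa.1 pa.2 qb.1 qb.2 := by
      intro pa qb
      have h1 : Δ (rnXi π V pa) = D0 (gx pa) := hΔS (gx pa)
      rw [h1, hD0gen]
      exact hBgen pa qb
    -- the four properties
    have hformula : ∀ x y z, ψ x y z = phiT π V Δ x y z := by
      intro x y z
      ext g
      refine ext_inner_left ℂ fun h => ?_
      have hx := hΔgen (Fin.cons y (fun i => x i.rev * z i), g) ((fun _ => (1 : A)), h)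
      have e1 : rnXi π V ((fun _ => (1 : A)), h) = V h := by
        unfold rnXi
        rw [rn_dilProd_one hrep]
        rfl
      have e2 : rnXi π V (Fin.cons y (fun i => x i.rev * z i), g)
          = dilOp π x y z (V g) := by
        unfold rnXi
        rw [rn_dilOp_eq]
      have e3 : gram ψ (Fin.cons y fun i => x i.rev * z i) g (fun _ => (1 : A)) h
          = inner ℂ h (ψ x y z g) := by
        unfold gram
        simp only [Fin.cons_zero, Fin.cons_succ, star_one, one_mul]
        have h5 := hinvψ (fun _ => (1 : A)) x y z
        have h6 : (fun i => (1 : A) * x i) = x := by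
          funext i
          rw [one_mul]
        rw [h6] at h5
        exact congrArg (fun T : H →L[ℂ] H => (inner ℂ h (T g) : ℂ)) h5.symm
      rw [e1, e2, e3] at hx
      rw [← hx]
      unfold phiT
      simp only [ContinuousLinearMap.comp_apply]
      rw [ContinuousLinearMap.adjoint_inner_right]
    have hcomm : InCommutant π Δ := by
      intro p0 c
      have hc : Δ.comp (π p0 c) = (π p0 c).comp Δ := by
        apply hgen_ext
        intro pa qb
        obtain ⟨a, g⟩ := pa
        obtain ⟨b, h⟩ := qb
        simp only [ContinuousLinearMap.comp_apply]
        rw [rn_xi_slot hrep p0 c a g, hΔgen (mulSlot p0 c a, g) (b, h),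
          ← ContinuousLinearMap.adjoint_inner_left (π p0 c)]
        have e2 : (ContinuousLinearMap.adjoint (π p0 c)) (rnXi π V (b, h))
            = rnXi π V (mulSlot p0 (star c) b, h) := by
          rw [← ContinuousLinearMap.star_eq_adjoint, ← hrep.2.2.2.2.1]
          exact rn_xi_slot hrep p0 (star c) b h
        rw [e2, hΔgen (a, g) (mulSlot p0 (star c) b, h)]
        exact rn_gram_slot hinvψ p0 c a g b h
      exact hc
    have hdense_nonneg : ∀ T : K →L[ℂ] K,
        (∀ u : ↥SP, 0 ≤ (inner ℂ (u : K) (T ↑u) : ℂ)) →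
        ∀ w : K, 0 ≤ (inner ℂ w (T w) : ℂ) := by
      intro T hS w
      have hcl : IsClosed {z : ℂ | 0 ≤ z} := by
        have he : {z : ℂ | 0 ≤ z} = Complex.re ⁻¹' Set.Ici 0 ∩ Complex.im ⁻¹' {0} := by
          ext z
          simp [Complex.nonneg_iff, eq_comm]
        rw [he]
        exact (isClosed_Ici.preimage Complex.continuous_re).inter
          (isClosed_singleton.preimage Complex.continuous_im)
      have hfc : Continuous fun w : K => (inner ℂ w (T w) : ℂ) :=
        Continuous.inner continuous_id T.continuous
      have h2 : IsClosed {w : K | 0 ≤ (inner ℂ w (T w) : ℂ)} := hcl.preimage hfc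
      have h3 : (SP : Set K) ⊆ {w : K | 0 ≤ (inner ℂ w (T w) : ℂ)} :=
        fun x hx => hS ⟨x, hx⟩
      have h4 := h2.closure_subset_iff.mpr h3
      rw [hdense.closure_eq] at h4
      exact h4 (Set.mem_univ w)
    have hpos : Δ.IsPositive := by
      apply rn_isPositive_of_inner_nonneg
      apply hdense_nonneg
      intro u
      rw [hΔS u, hD0inner u u]
      exact hBdiag_nonneg u
    have hpos1 : ((1 : K →L[ℂ] K) - Δ).IsPositive := by
      apply rn_isPositive_of_inner_nonneg
      apply hdense_nonneg
      intro u
      rw [ContinuousLinearMap.sub_apply, ContinuousLinearMap.one_apply,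
        inner_sub_right, hΔS u, hD0inner u u, inner_self_eq_norm_sq_to_K]
      rw [sub_nonneg]
      exact hBdiag_le u
    refine ⟨Δ, ⟨hcomm, hpos, hpos1, hformula⟩, ?_⟩
    rintro Δ' ⟨hcomm', hpos', hpos1', hformula'⟩
    apply hgen_ext
    intro pa qb
    rw [hkey Δ' hcomm' hformula' pa qb, hΔgen pa qb]
  · -- Reverse direction.
    rintro ⟨Δ, ⟨hcomm, hpos, hpos1, hformula⟩, -⟩
    intro n a g
    have hgψ : ∀ j i : Fin n, gram ψ (a j) (g j) (a i) (g i)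
        = inner ℂ (rnXi π V (a i, g i)) (Δ (rnXi π V (a j, g j))) := by
      intro j i
      have h1 : gram ψ (a j) (g j) (a i) (g i)
          = gram (phiT π V Δ) (a j) (g j) (a i) (g i) := by
        unfold gram
        rw [hformula]
      rw [h1, rn_gram_phiT hrep hcomm]
    have hcalc : ∀ j i : Fin n,
        gram φ (a j) (g j) (a i) (g i) - gram ψ (a j) (g j) (a i) (g i)
        = inner ℂ (rnXi π V (a i, g i))
            ((((1 : K →L[ℂ] K) - Δ)) (rnXi π V (a j, g j))) := by
      intro j i
      rw [rn_gram_phi hrep hdil, hgψ j i, ContinuousLinearMap.sub_apply,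
        ContinuousLinearMap.one_apply, inner_sub_right]
    simp_rw [hcalc]
    simp_rw [← sum_inner]
    rw [← inner_sum, ← map_sum]
    exact rn_inner_nonneg_of_isPositive hpos1 _
end
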